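/- For all real $\pi, \nu > 0$, all integers $n \geq 2$, $u \in \{2,\ldots,n\}$, $z \in \{0,\ldots,n-1\}$ and $k \in \{\max\{0, z-(u-1)\}, \ldots, \min\{z, n-u\}\}$, one has $\sum_{q=0}^{u} (-1)^q \binom{u}{q} \frac{B(\pi+z+q, \nu+n+u-1-z-q)}{B(\pi+k+q, \nu+n-k-q)} = 0$, where $B(x,y) = \Gamma(x)\Gamma(y)/\Gamma(x+y)$ is the Beta function. -/

import Mathlib

open Finset Polynomial
open scoped fwdDiff

/-- The Euler Beta function `B(x,y) = Γ(x)Γ(y)/Γ(x+y)`. -/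
noncomputable def Beta (x y : ℝ) : ℝ := Real.Gamma x * Real.Gamma y / Real.Gamma (x + y)

lemma Gamma_add_nat' {x : ℝ} (hx : 0 < x) (m : ℕ) :
    Real.Gamma (x + m) = (∏ i ∈ Finset.range m, (x + i)) * Real.Gamma x := by
  induction m with
  | zero => simp
  | succ m ih =>
    have h1 : x + ((m + 1 : ℕ) : ℝ) = (x + m) + 1 := by push_cast; ring
    rw [h1, Real.Gamma_add_one (by positivity), ih, Finset.prod_range_succ]
    ring

lemma fwdDiff_iter_poly (u : ℕ) (P : Polynomial ℝ) (hP : P.degree < u) :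
    (fwdDiff (1:ℝ))^[u] (fun x : ℝ => P.eval x) = 0 := by
  induction u generalizing P with
  | zero =>
    have hP0 : P = 0 := by
      rw [← Polynomial.degree_eq_bot]
      exact Nat.WithBot.lt_zero_iff.mp (by exact_mod_cast hP)
    funext x
    simp [hP0]
  | succ u ih =>
    rw [Function.iterate_succ_apply]
    have hD : (fwdDiff (1:ℝ)) (fun x : ℝ => P.eval x)
        = fun x : ℝ => (P.comp (X + 1) - P).eval x := by
      funext x
      simp [fwdDiff, Polynomial.eval_comp]
    rw [hD]
    apply ih
    by_cases h0 : P.degree ≤ 0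
    · rw [Polynomial.eq_C_of_degree_le_zero h0]
      simp only [Polynomial.C_comp, sub_self, Polynomial.degree_zero]
      exact_mod_cast WithBot.bot_lt_coe u
    · push_neg at h0
      have hPne : P ≠ 0 := fun h => by simp [h] at h0
      have hnd : (X + 1 : Polynomial ℝ).natDegree = 1 := by
        simpa using Polynomial.natDegree_X_add_C (1 : ℝ)
      have hlc : (P.comp (X + 1)).leadingCoeff = P.leadingCoeff := by
        rw [Polynomial.leadingCoeff_comp (by rw [hnd]; norm_num)]
        have : (X + 1 : Polynomial ℝ).leadingCoeff = 1 := by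
          simpa using Polynomial.leadingCoeff_X_add_C (1 : ℝ)
        simp [this]
      have hcompne : P.comp (X + 1) ≠ 0 := by
        intro h
        rw [h] at hlc
        simp only [Polynomial.leadingCoeff_zero] at hlc
        exact hPne (Polynomial.leadingCoeff_eq_zero.mp hlc.symm)
      have hdeg : (P.comp (X + 1)).degree = P.degree := by
        rw [Polynomial.degree_eq_natDegree hcompne, Polynomial.degree_eq_natDegree hPne,
          Polynomial.natDegree_comp, hnd, mul_one]
      have hlt : (P.comp (X + 1) - P).degree < P.degree := by
        have := Polynomial.degree_sub_lt hdeg hcompne hlc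
        rwa [hdeg] at this
      rcases eq_or_ne (P.comp (X + 1) - P) 0 with hQ | hQ
      · rw [hQ, Polynomial.degree_zero]
        exact_mod_cast WithBot.bot_lt_coe u
      · have h1 : (P.comp (X + 1) - P).natDegree < P.natDegree :=
          Polynomial.natDegree_lt_natDegree hQ hlt
        have h2 : P.natDegree < u + 1 := (Polynomial.natDegree_lt_iff_degree_lt hPne).mpr (by exact_mod_cast hP)
        exact (Polynomial.natDegree_lt_iff_degree_lt hQ).mp (by omega)

theorem beta_alternating_sum (π ν : ℝ) (hπ : 0 < π) (hν : 0 < ν)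
    (n u z k : ℕ) (hn : 2 ≤ n) (hu2 : 2 ≤ u) (hun : u ≤ n)
    (hz : z ≤ n - 1) (hk1 : z - (u - 1) ≤ k) (hk2 : k ≤ min z (n - u)) :
    ∑ q ∈ Finset.range (u + 1), (-1 : ℝ) ^ q * (u.choose q : ℝ) *
      (Beta (π + z + q) (ν + n + u - 1 - z - q) / Beta (π + k + q) (ν + n - k - q)) = 0 := by
  set a := z - k with ha
  set b := u - 1 - (z - k) with hb
  have hkz : k ≤ z := le_trans hk2 (min_le_left _ _)
  have hkn : k ≤ n - u := le_trans hk2 (min_le_right _ _)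
  have hkun : k + u ≤ n := by omega
  have hab : a + b = u - 1 := by omega
  have hzr : (z : ℝ) = k + a := by
    have : (a : ℕ) + k = z := by omega
    push_cast [← this]; ring
  have hur : (u : ℝ) = a + b + 1 := by
    have : a + b + 1 = u := by omega
    exact_mod_cast this.symm
  -- the constant
  set Cst : ℝ := ∏ i ∈ Finset.range (a + b), (π + ν + n + i) with hCst
  have hCstpos : 0 < Cst := by
    apply Finset.prod_pos
    intro i _
    positivity
  -- the polynomial
  set P : Polynomial ℝ :=
    (∏ i ∈ Finset.range a, (X + C (π + k + i))) *
      (∏ j ∈ Finset.range b, (C (ν + n - k + j) - X)) with hP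
  set g : ℝ → ℝ := fun t => P.eval t with hg
  have hgval : ∀ t : ℝ, g t =
      (∏ i ∈ Finset.range a, (t + (π + k + i))) *
        (∏ j ∈ Finset.range b, ((ν + n - k + j) - t)) := by
    intro t
    simp [hg, hP, Polynomial.eval_prod]
  -- degree of P
  have hPdeg : P.degree < (u : ℕ) := by
    have hXC : ∀ c : ℝ, (X + C c : Polynomial ℝ) ≠ 0 := fun c =>
      Polynomial.X_add_C_ne_zero c
    have hCX : ∀ c : ℝ, (C c - X : Polynomial ℝ) ≠ 0 := by
      intro c h
      have : (X - C c : Polynomial ℝ) = 0 := by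
        have := congrArg (fun p => -p) h
        simpa [neg_sub] using this
      exact Polynomial.X_sub_C_ne_zero c this
    have hndCX : ∀ c : ℝ, (C c - X : Polynomial ℝ).natDegree = 1 := by
      intro c
      rw [show (C c - X : Polynomial ℝ) = -(X - C c) by ring, Polynomial.natDegree_neg,
        Polynomial.natDegree_X_sub_C]
    have h1ne : (∏ i ∈ Finset.range a, (X + C (π + k + i) : Polynomial ℝ)) ≠ 0 :=
      Finset.prod_ne_zero_iff.mpr fun i _ => hXC _
    have h2ne : (∏ j ∈ Finset.range b, (C (ν + n - k + j) - X : Polynomial ℝ)) ≠ 0 :=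
      Finset.prod_ne_zero_iff.mpr fun j _ => hCX _
    have hPne : P ≠ 0 := mul_ne_zero h1ne h2ne
    have hnd : P.natDegree = a + b := by
      rw [hP, Polynomial.natDegree_mul h1ne h2ne,
        Polynomial.natDegree_prod _ _ (fun i _ => hXC _),
        Polynomial.natDegree_prod _ _ (fun j _ => hCX _)]
      simp only [Polynomial.natDegree_X_add_C, hndCX, Finset.sum_const, smul_eq_mul, mul_one,
        Finset.card_range]
    rw [← Polynomial.natDegree_lt_iff_degree_lt hPne, hnd]
    omega
  -- the u-th forward difference vanishes
  have hfd : (fwdDiff (1:ℝ))^[u] g = 0 := fwdDiff_iter_poly u P hPdeg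
  have key := fwdDiff_iter_eq_sum_shift (1 : ℝ) g u 0
  rw [hfd] at key
  simp only [Pi.zero_apply, zero_add, nsmul_eq_mul, mul_one, zsmul_eq_mul, Int.cast_mul,
    Int.cast_pow, Int.cast_neg, Int.cast_one, Int.cast_natCast] at key
  -- the alternating sum of g vanishes
  have hsum : ∑ q ∈ Finset.range (u + 1), (-1 : ℝ) ^ q * (u.choose q : ℝ) * g q = 0 := by
    have : ∑ q ∈ Finset.range (u + 1), (-1 : ℝ) ^ q * (u.choose q : ℝ) * g q
        = (-1 : ℝ) ^ u * ∑ q ∈ Finset.range (u + 1),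
            (-1 : ℝ) ^ (u - q) * (u.choose q : ℝ) * g q := by
      rw [Finset.mul_sum]
      apply Finset.sum_congr rfl
      intro q hq
      have hqu : q ≤ u := Nat.lt_succ_iff.mp (Finset.mem_range.mp hq)
      have h1 : ((-1 : ℝ)) ^ (u - q) * (-1) ^ (u - q) = 1 := by
        rw [← pow_add, ← two_mul, pow_mul]; norm_num
      have h2 : ((-1 : ℝ)) ^ u = (-1) ^ (u - q) * (-1) ^ q := by
        rw [← pow_add, Nat.sub_add_cancel hqu]
      have h3 : ((-1 : ℝ)) ^ q = (-1) ^ u * (-1) ^ (u - q) := by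
        linear_combination (-(-1 : ℝ) ^ (u - q)) * h2 - (-1 : ℝ) ^ q * h1
      rw [h3]; ring
    rw [this, ← key]
    ring
  -- per-term identity
  have hterm : ∀ q ∈ Finset.range (u + 1),
      Beta (π + z + q) (ν + n + u - 1 - z - q) / Beta (π + k + q) (ν + n - k - q)
        = g q / Cst := by
    intro q hq
    have hqu : q ≤ u := Nat.lt_succ_iff.mp (Finset.mem_range.mp hq)
    have hkq : ((k : ℝ) + q) ≤ n := by
      have : ((k + q : ℕ) : ℝ) ≤ ((n : ℕ) : ℝ) := by exact_mod_cast (by omega : k + q ≤ n)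
      push_cast at this; linarith
    set x : ℝ := π + k + q with hx
    set y : ℝ := ν + n - k - q with hy
    have hxpos : 0 < x := by positivity
    have hypos : 0 < y := by rw [hy]; linarith
    have hxy : x + y = π + ν + n := by rw [hx, hy]; ring
    have e1 : π + z + q = x + a := by rw [hzr, hx]; ring
    have e2 : ν + n + u - 1 - z - q = y + b := by rw [hur, hzr, hy]; ring
    have e3 : (x + a) + (y + b) = (π + ν + n) + ((a + b : ℕ) : ℝ) := by
      push_cast; rw [hx, hy]; ring
    rw [e1, e2, Beta, Beta, e3]
    rw [Gamma_add_nat' hxpos a, Gamma_add_nat' hypos b, hxy,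
      Gamma_add_nat' (by positivity : (0:ℝ) < π + ν + n) (a + b)]
    rw [hgval]
    have hΓx : Real.Gamma x ≠ 0 := (Real.Gamma_pos_of_pos hxpos).ne'
    have hΓy : Real.Gamma y ≠ 0 := (Real.Gamma_pos_of_pos hypos).ne'
    have hΓxy : Real.Gamma (π + ν + n) ≠ 0 :=
      (Real.Gamma_pos_of_pos (by positivity)).ne'
    have hprod1 : (∏ i ∈ Finset.range a, ((q : ℝ) + (π + k + i)))
        = ∏ i ∈ Finset.range a, (x + i) := by
      apply Finset.prod_congr rfl; intro i _; rw [hx]; ring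
    have hprod2 : (∏ j ∈ Finset.range b, ((ν + n - k + j) - (q : ℝ)))
        = ∏ j ∈ Finset.range b, (y + j) := by
      apply Finset.prod_congr rfl; intro j _; rw [hy]; ring
    rw [hprod1, hprod2, hCst]
    field_simp
  rw [Finset.sum_congr rfl (fun q hq => by rw [hterm q hq])]
  have : ∑ q ∈ Finset.range (u + 1),
      (-1 : ℝ) ^ q * (u.choose q : ℝ) * (g q / Cst)
      = (∑ q ∈ Finset.range (u + 1), (-1 : ℝ) ^ q * (u.choose q : ℝ) * g q) / Cst := by
    rw [Finset.sum_div]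
    apply Finset.sum_congr rfl
    intro q _
    ring
  rw [this, hsum, zero_div]
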